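/- arXiv:1912.10745 — 2 statements merged into one kernel-verified Lean document; each statement's English description precedes it below -/
import Mathlib

section
/- Let R be a graded commutative ring and {f_i}_{1≤i≤n}, {h_i}_{1≤i≤n} two sequences of homogeneous elements with deg f_1 < ⋯ < deg f_n and deg h_i = deg f_i for each i. If for every i the difference f_i − h_i lies in the ideal generated by f_1,…,f_{i−1}, then the ideals ⟨h_1,…,h_n⟩ and ⟨f_1,…,f_n⟩ are equal. -/
lemma aux_sup_span_eq {R : Type*} [CommRing R] (I : Ideal R) {a b : R}
    (hab : a - b ∈ I) : I ⊔ Ideal.span {a} = I ⊔ Ideal.span {b} := by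
  have h1 : ∀ x y : R, x - y ∈ I → x ∈ I ⊔ Ideal.span {y} := by
    intro x y hxy
    have hx : x = (x - y) + y := by ring
    rw [hx]
    exact Ideal.add_mem _ (Ideal.mem_sup_left hxy)
      (Ideal.mem_sup_right (Ideal.subset_span rfl))
  apply le_antisymm
  · rw [sup_le_iff]
    refine ⟨le_sup_left, (Ideal.span_le).2 fun x hx => ?_⟩
    rw [Set.mem_singleton_iff] at hx; subst hx
    exact h1 _ _ hab
  · rw [sup_le_iff]
    refine ⟨le_sup_left, (Ideal.span_le).2 fun x hx => ?_⟩
    rw [Set.mem_singleton_iff] at hx; subst hx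
    exact h1 _ _ (by simpa using I.neg_mem hab)

/-- Let `R` be a graded commutative ring and `{f_i}`, `{h_i}` (`1 ≤ i ≤ n`)
two sequences of homogeneous elements with `deg f_1 < ⋯ < deg f_n` and `deg h_i = deg f_i`.
If for every `i` the difference `f_i − h_i` lies in the ideal generated by `f_1, …, f_{i−1}`,
then `⟨h_1, …, h_n⟩ = ⟨f_1, …, f_n⟩`. -/
theorem ideal_eq_of_successive_congruences
    {R : Type*} [CommRing R] (𝒜 : ℕ → Submodule ℤ R) [GradedRing 𝒜]
    (n : ℕ) (f h : Fin n → R) (d : Fin n → ℕ) (hd : StrictMono d)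
    (hf : ∀ i, f i ∈ 𝒜 (d i)) (hh : ∀ i, h i ∈ 𝒜 (d i))
    (hcong : ∀ i : Fin n, f i - h i ∈ Ideal.span (f '' {j | j < i})) :
    Ideal.span (Set.range h) = Ideal.span (Set.range f) := by
  have key : ∀ k : ℕ, k ≤ n →
      Ideal.span (f '' {j : Fin n | j.val < k}) = Ideal.span (h '' {j : Fin n | j.val < k}) := by
    intro k
    induction k with
    | zero =>
      intro _
      have : {j : Fin n | j.val < 0} = ∅ := by ext j; simp
      simp [this]
    | succ k ih =>
      intro hk
      have hkn : k < n := hk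
      set i : Fin n := ⟨k, hkn⟩ with hi
      have hset : {j : Fin n | j.val < k + 1} = insert i {j : Fin n | j.val < k} := by
        ext j
        simp [Fin.ext_iff, Nat.lt_succ_iff_lt_or_eq, hi]
        omega
      have hlt : {j : Fin n | j < i} = {j : Fin n | j.val < k} := by
        ext j; exact Iff.rfl
      have hIH := ih (le_of_lt hkn)
      have hcg := hcong i
      rw [hlt] at hcg
      rw [hset, Set.image_insert_eq, Set.image_insert_eq,
        Ideal.span_insert, Ideal.span_insert, sup_comm (Ideal.span {f i}),
        sup_comm (Ideal.span {h i}),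
        aux_sup_span_eq _ hcg, hIH]
  have huniv : {j : Fin n | j.val < n} = Set.univ := by
    ext j; simp [j.isLt]
  have := key n le_rfl
  rw [huniv, Set.image_univ, Set.image_univ] at this
  exact this.symm
end

section
/- For the ring H = Z[x_1,…,x_m]/J where J is generated by x_j^2 − Σ_{i<j} a_{i,j} x_i x_j for 1 ≤ j ≤ m (with a_{i,j} integers), the degree-2m component of H (grading deg x_i = 2) is a free abelian group of rank 1 generated by the class of x_1⋯x_m. -/
open MvPolynomial Finsupp

/-- The ideal `J = ⟨x_j^2 − Σ_{i<j} a_{i,j} x_i x_j : 1 ≤ j ≤ m⟩` of the Bott–Samelson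
cohomology ring `H^*(Γ(β_1, …, β_m)) = ℤ[x_1, …, x_m]/J` (Lemma 3.1). -/
noncomputable def BSideal (m : ℕ) (a : Fin m → Fin m → ℤ) :
    Ideal (MvPolynomial (Fin m) ℤ) :=
  Ideal.span (Set.range fun j : Fin m =>
    X j ^ 2 - ∑ i ∈ Finset.univ.filter (fun i : Fin m => i < j), C (a i j) * X i * X j)

variable {m : ℕ}

lemma sum_weight_move (w : Fin m → ℕ) {d : Fin m →₀ ℕ} {i j : Fin m} (hdj : 1 ≤ d j) :
    (∑ k, ((d - Finsupp.single j 1 + Finsupp.single i 1 : Fin m →₀ ℕ)) k * w k) + w j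
      = (∑ k, d k * w k) + w i := by
  classical
  have h1 : ∀ k, (d - Finsupp.single j 1 + Finsupp.single i 1 : Fin m →₀ ℕ) k
      = (d k - (Finsupp.single j 1 : Fin m →₀ ℕ) k) + (Finsupp.single i 1 : Fin m →₀ ℕ) k := by
    intro k; simp [Finsupp.tsub_apply]
  calc (∑ k, (d - Finsupp.single j 1 + Finsupp.single i 1 : Fin m →₀ ℕ) k * w k) + w j
      = (∑ k, ((d k - (Finsupp.single j 1 : Fin m →₀ ℕ) k) * w k
          + (Finsupp.single i 1 : Fin m →₀ ℕ) k * w k)) + w j := by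
        simp only [h1, add_mul]
    _ = ((∑ k, (d k - (Finsupp.single j 1 : Fin m →₀ ℕ) k) * w k)
          + (∑ k, (Finsupp.single i 1 : Fin m →₀ ℕ) k * w k)) + w j := by
        rw [Finset.sum_add_distrib]
    _ = ((∑ k, (d k - (Finsupp.single j 1 : Fin m →₀ ℕ) k) * w k) + w j) + w i := by
        have h3 : (∑ k, (Finsupp.single i 1 : Fin m →₀ ℕ) k * w k) = w i := by
          rw [Finset.sum_eq_single i]
          · simp
          · intro b _ hb; simp [Finsupp.single_apply, Ne.symm hb]
          · intro hb; exact absurd (Finset.mem_univ i) hb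
        rw [h3]; ring
    _ = (∑ k, d k * w k) + w i := by
        congr 1
        rw [← Finset.sum_erase_add _ _ (Finset.mem_univ j),
          ← Finset.sum_erase_add _ _ (Finset.mem_univ j)]
        have h2 : ∀ k ∈ Finset.univ.erase j,
            (d k - (Finsupp.single j 1 : Fin m →₀ ℕ) k) * w k = d k * w k := by
          intro k hk
          rw [Finsupp.single_apply, if_neg (Finset.ne_of_mem_erase hk).symm]
          simp
        rw [Finset.sum_congr rfl h2]
        have h4 : (d j - (Finsupp.single j 1 : Fin m →₀ ℕ) j) * w j + w j = d j * w j := by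
          rw [Finsupp.single_apply, if_pos rfl]
          obtain ⟨t, ht⟩ : ∃ t, d j = t + 1 := ⟨d j - 1, by omega⟩
          rw [ht, Nat.add_sub_cancel]; ring
        rw [add_assoc, h4]

lemma mu_move {d : Fin m →₀ ℕ} {i j : Fin m} (hij : i < j) (hdj : 1 ≤ d j) :
    (∑ k, (d - Finsupp.single j 1 + Finsupp.single i 1 : Fin m →₀ ℕ) k * k.val)
      < ∑ k, d k * k.val := by
  have h := sum_weight_move (fun k : Fin m => k.val) (d := d) (i := i) (j := j) hdj
  beta_reduce at h
  have hij' : i.val < j.val := hij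
  omega

lemma deg_move {d : Fin m →₀ ℕ} {i j : Fin m} (hdj : 1 ≤ d j) :
    (∑ k, (d - Finsupp.single j 1 + Finsupp.single i 1 : Fin m →₀ ℕ) k) = ∑ k, d k := by
  have h := sum_weight_move (fun _ : Fin m => 1) (d := d) (i := i) (j := j) hdj
  simp only [mul_one] at h
  omega

/-- the top-coefficient of the normal form of the monomial with exponent `d`. -/
noncomputable def NN (m : ℕ) (a : Fin m → Fin m → ℤ) (d : Fin m →₀ ℕ) : ℤ :=
  if (∑ i, d i) = m then
    if hs : ∃ j, 2 ≤ d j then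
      ∑ i ∈ (Finset.univ.filter fun i => i < hs.choose).attach,
        a i.1 hs.choose * NN m a (d - Finsupp.single hs.choose 1 + Finsupp.single i.1 1)
    else 1
  else 0
termination_by ∑ i, d i * i.val
decreasing_by
  have hj := hs.choose_spec
  have hi : i.1 < hs.choose := by
    have := i.2; simp only [Finset.mem_filter] at this; exact this.2
  exact mu_move hi (le_trans one_le_two hj)

lemma move_comm {d : Fin m →₀ ℕ} {i i' j j' : Fin m} (hjj' : j ≠ j')
    (hdj : 1 ≤ d j) (hdj' : 1 ≤ d j') :
    (d - Finsupp.single j 1 + Finsupp.single i 1) - Finsupp.single j' 1 + Finsupp.single i' 1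
      = (d - Finsupp.single j' 1 + Finsupp.single i' 1) - Finsupp.single j 1
          + Finsupp.single i 1 := by
  have key : ∀ (p q : Fin m) (u v : Fin m), p ≠ q → 1 ≤ d p → 1 ≤ d q →
      (d - Finsupp.single p 1 + Finsupp.single u 1) - Finsupp.single q 1 + Finsupp.single v 1
        = d + Finsupp.single u 1 + Finsupp.single v 1
            - (Finsupp.single p 1 + Finsupp.single q 1) := by
    intro p q u v hpq hdp hdq
    have l1 : (Finsupp.single p 1 : Fin m →₀ ℕ) ≤ d := Finsupp.single_le_iff.mpr hdp
    have e1 : d - Finsupp.single p 1 + Finsupp.single u 1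
        = d + Finsupp.single u 1 - Finsupp.single p 1 := tsub_add_eq_add_tsub l1
    have l2 : (Finsupp.single q 1 : Fin m →₀ ℕ) ≤ d + Finsupp.single u 1 - Finsupp.single p 1 := by
      rw [Finsupp.single_le_iff, Finsupp.tsub_apply, Finsupp.add_apply]
      simp only [Finsupp.single_apply, if_neg hpq]
      split_ifs <;> omega
    have l3 : (Finsupp.single p 1 : Fin m →₀ ℕ) ≤ d + Finsupp.single u 1 :=
      le_trans l1 (by simp [Finsupp.le_iff, Finsupp.add_apply])
    calc (d - Finsupp.single p 1 + Finsupp.single u 1) - Finsupp.single q 1 + Finsupp.single v 1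
        = (d + Finsupp.single u 1 - Finsupp.single p 1) + Finsupp.single v 1
            - Finsupp.single q 1 := by rw [e1, tsub_add_eq_add_tsub l2]
      _ = (d + Finsupp.single u 1 + Finsupp.single v 1) - Finsupp.single p 1
            - Finsupp.single q 1 := by rw [tsub_add_eq_add_tsub l3]
      _ = d + Finsupp.single u 1 + Finsupp.single v 1
            - (Finsupp.single p 1 + Finsupp.single q 1) := by rw [tsub_tsub]
  rw [key j j' i i' hjj' hdj hdj', key j' j i' i (Ne.symm hjj') hdj' hdj]
  rw [show (d + Finsupp.single i' 1 + Finsupp.single i 1 : Fin m →₀ ℕ)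
      = d + Finsupp.single i 1 + Finsupp.single i' 1 by
    rw [add_assoc, add_assoc, add_comm (Finsupp.single i' 1)]]
  rw [add_comm (Finsupp.single j' 1)]

lemma move_apply (d : Fin m →₀ ℕ) (i j k : Fin m) :
    (d - Finsupp.single j 1 + Finsupp.single i 1 : Fin m →₀ ℕ) k
      = d k - (if j = k then 1 else 0) + (if i = k then 1 else 0) := by
  simp [Finsupp.tsub_apply, Finsupp.single_apply]

lemma NN_step (a : Fin m → Fin m → ℤ) :
    ∀ (M : ℕ) (d : Fin m →₀ ℕ) (j : Fin m), (∑ k, d k * k.val) < M → 2 ≤ d j →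
    NN m a d = ∑ i ∈ Finset.univ.filter (fun i => i < j),
      a i j * NN m a (d - Finsupp.single j 1 + Finsupp.single i 1) := by
  intro M
  induction M with
  | zero => intro d j hM _; exact absurd hM (Nat.not_lt_zero _)
  | succ M IH =>
    intro d j hM hj
    by_cases hS : (∑ k, d k) = m
    · have hs : ∃ j', 2 ≤ d j' := ⟨j, hj⟩
      have hj₀ : 2 ≤ d hs.choose := hs.choose_spec
      have hNd : NN m a d = ∑ i ∈ Finset.univ.filter (fun i => i < hs.choose),
          a i hs.choose * NN m a (d - Finsupp.single hs.choose 1 + Finsupp.single i 1) := by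
        rw [NN, if_pos hS, dif_pos hs]
        exact Finset.sum_attach (Finset.univ.filter fun i => i < hs.choose)
          (fun i => a i hs.choose * NN m a (d - Finsupp.single hs.choose 1 + Finsupp.single i 1))
      rcases eq_or_ne j hs.choose with hjj | hjj
      · rw [hjj]; exact hNd
      · -- two different reduction positions; use the diamond argument
        have hμd : (∑ k, d k * k.val) ≤ M := by omega
        have hmeas : ∀ (j' : Fin m) (i : Fin m), i < j' → 1 ≤ d j' →
            (∑ k, (d - Finsupp.single j' 1 + Finsupp.single i 1 : Fin m →₀ ℕ) k * k.val) < M :=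
          fun j' i hi h1 => lt_of_lt_of_le (mu_move hi h1) hμd
        have hd2 : ∀ i : Fin m,
            2 ≤ (d - Finsupp.single hs.choose 1 + Finsupp.single i 1 : Fin m →₀ ℕ) j := by
          intro i
          rw [move_apply, if_neg (Ne.symm hjj)]
          split_ifs <;> omega
        have hd2' : ∀ i' : Fin m,
            2 ≤ (d - Finsupp.single j 1 + Finsupp.single i' 1 : Fin m →₀ ℕ) hs.choose := by
          intro i'
          rw [move_apply, if_neg hjj]
          split_ifs <;> omega
        calc NN m a d
            = ∑ i ∈ Finset.univ.filter (fun i => i < hs.choose),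
              a i hs.choose * NN m a (d - Finsupp.single hs.choose 1 + Finsupp.single i 1) := hNd
          _ = ∑ i ∈ Finset.univ.filter (fun i => i < hs.choose),
              a i hs.choose * ∑ i' ∈ Finset.univ.filter (fun i' => i' < j), a i' j *
                NN m a ((d - Finsupp.single j 1 + Finsupp.single i' 1)
                  - Finsupp.single hs.choose 1 + Finsupp.single i 1) := by
              refine Finset.sum_congr rfl fun i hi => ?_
              have hilt : i < hs.choose := (Finset.mem_filter.mp hi).2
              rw [IH _ j (hmeas hs.choose i hilt (by omega)) (hd2 i)]
              congr 1
              refine Finset.sum_congr rfl fun i' _ => ?_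
              rw [move_comm (Ne.symm hjj) (by omega) (by omega)]
          _ = ∑ i' ∈ Finset.univ.filter (fun i' => i' < j),
              a i' j * ∑ i ∈ Finset.univ.filter (fun i => i < hs.choose), a i hs.choose *
                NN m a ((d - Finsupp.single j 1 + Finsupp.single i' 1)
                  - Finsupp.single hs.choose 1 + Finsupp.single i 1) := by
              simp_rw [Finset.mul_sum]
              rw [Finset.sum_comm]
              refine Finset.sum_congr rfl fun i' _ => Finset.sum_congr rfl fun i _ => by ring
          _ = ∑ i' ∈ Finset.univ.filter (fun i' => i' < j),
              a i' j * NN m a (d - Finsupp.single j 1 + Finsupp.single i' 1) := by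
              refine Finset.sum_congr rfl fun i' hi' => ?_
              have hilt : i' < j := (Finset.mem_filter.mp hi').2
              rw [IH _ hs.choose (hmeas j i' hilt (by omega)) (hd2' i')]
    · -- degree is not m : everything is zero
      have h0 : NN m a d = 0 := by rw [NN, if_neg hS]
      have h0' : ∀ i : Fin m, i < j →
          NN m a (d - Finsupp.single j 1 + Finsupp.single i 1) = 0 := by
        intro i _
        rw [NN, if_neg]
        rw [deg_move (by omega)]
        exact hS
      rw [h0, Finset.sum_congr rfl fun i hi => by
        rw [h0' i (Finset.mem_filter.mp hi).2, mul_zero]]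
      simp

/-- the "coefficient of the top class" linear functional -/
noncomputable def LL (m : ℕ) (a : Fin m → Fin m → ℤ) (p : MvPolynomial (Fin m) ℤ) : ℤ :=
  ∑ d ∈ p.support, p.coeff d * NN m a d

variable {a : Fin m → Fin m → ℤ}

lemma LL_eq_sum_of_subset {p : MvPolynomial (Fin m) ℤ} {s : Finset (Fin m →₀ ℕ)}
    (hs : p.support ⊆ s) : LL m a p = ∑ d ∈ s, p.coeff d * NN m a d :=
  Finset.sum_subset hs fun d _ hd => by
    rw [MvPolynomial.notMem_support_iff.mp hd, zero_mul]

lemma LL_monomial (d : Fin m →₀ ℕ) (c : ℤ) : LL m a (monomial d c) = c * NN m a d := by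
  have : (monomial d c).support ⊆ {d} := MvPolynomial.support_monomial_subset
  rw [LL_eq_sum_of_subset this, Finset.sum_singleton, MvPolynomial.coeff_monomial, if_pos rfl]

lemma LL_add (p q : MvPolynomial (Fin m) ℤ) : LL m a (p + q) = LL m a p + LL m a q := by
  rw [LL_eq_sum_of_subset (s := p.support ∪ q.support) MvPolynomial.support_add,
    LL_eq_sum_of_subset (s := p.support ∪ q.support) Finset.subset_union_left,
    LL_eq_sum_of_subset (s := p.support ∪ q.support) Finset.subset_union_right,
    ← Finset.sum_add_distrib]
  refine Finset.sum_congr rfl fun d _ => ?_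
  rw [MvPolynomial.coeff_add, add_mul]

lemma LL_zero : LL m a 0 = 0 := by simp [LL]

lemma LL_smul (z : ℤ) (p : MvPolynomial (Fin m) ℤ) : LL m a (z • p) = z * LL m a p := by
  rw [LL_eq_sum_of_subset (s := p.support) MvPolynomial.support_smul, LL, Finset.mul_sum]
  refine Finset.sum_congr rfl fun d _ => ?_
  rw [MvPolynomial.coeff_smul, smul_eq_mul, mul_assoc]

lemma LL_sub (p q : MvPolynomial (Fin m) ℤ) : LL m a (p - q) = LL m a p - LL m a q := by
  rw [sub_eq_add_neg, LL_add, ← neg_one_smul ℤ q, LL_smul]; ring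

lemma LL_sum {ι : Type*} (s : Finset ι) (f : ι → MvPolynomial (Fin m) ℤ) :
    LL m a (∑ i ∈ s, f i) = ∑ i ∈ s, LL m a (f i) := by
  classical
  induction s using Finset.cons_induction with
  | empty => simpa using LL_zero
  | cons i s his ih => rw [Finset.sum_cons, Finset.sum_cons, LL_add, ih]

lemma sub2_add_move {d : Fin m →₀ ℕ} {j : Fin m} (hj : 2 ≤ d j) (i : Fin m) :
    (d - Finsupp.single j 2) + (Finsupp.single i 1 + Finsupp.single j 1)
      = d - Finsupp.single j 1 + Finsupp.single i 1 := by
  have h2 : (Finsupp.single j 2 : Fin m →₀ ℕ) = Finsupp.single j 1 + Finsupp.single j 1 := by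
    rw [← Finsupp.single_add]
  have hle : (Finsupp.single j 1 : Fin m →₀ ℕ) ≤ d - Finsupp.single j 1 := by
    rw [Finsupp.single_le_iff, Finsupp.tsub_apply, Finsupp.single_apply, if_pos rfl]
    omega
  calc (d - Finsupp.single j 2) + (Finsupp.single i 1 + Finsupp.single j 1)
      = ((d - Finsupp.single j 1 - Finsupp.single j 1) + Finsupp.single j 1)
          + Finsupp.single i 1 := by
        rw [h2, ← tsub_tsub, add_comm (Finsupp.single i 1), ← add_assoc]
    _ = d - Finsupp.single j 1 + Finsupp.single i 1 := by
        rw [tsub_add_cancel_of_le hle]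

/-- the relation generator -/
noncomputable def rel (m : ℕ) (a : Fin m → Fin m → ℤ) (j : Fin m) : MvPolynomial (Fin m) ℤ :=
  X j ^ 2 - ∑ i ∈ Finset.univ.filter (fun i : Fin m => i < j), C (a i j) * X i * X j

lemma LL_monomial_mul_rel (d : Fin m →₀ ℕ) (c : ℤ) (j : Fin m) :
    LL m a (monomial d c * rel m a j) = 0 := by
  have hXX : ∀ i : Fin m, (monomial d c : MvPolynomial (Fin m) ℤ) * (C (a i j) * X i * X j)
      = monomial (d + (Finsupp.single i 1 + Finsupp.single j 1)) (c * a i j) := by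
    intro i
    rw [mul_assoc, mul_comm (X i) (X j)]
    rw [show (X j : MvPolynomial (Fin m) ℤ) * X i
        = monomial (Finsupp.single i 1 + Finsupp.single j 1) 1 by
      rw [← pow_one (X j : MvPolynomial (Fin m) ℤ), ← pow_one (X i : MvPolynomial (Fin m) ℤ),
        X_pow_eq_monomial, X_pow_eq_monomial, monomial_mul, mul_one, add_comm]]
    rw [C_mul_monomial, mul_one, monomial_mul]
  have hX2 : (monomial d c : MvPolynomial (Fin m) ℤ) * X j ^ 2
      = monomial (d + Finsupp.single j 2) c := by
    rw [X_pow_eq_monomial, monomial_mul, mul_one]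
  rw [rel, mul_sub, hX2, Finset.mul_sum]
  rw [LL_sub, LL_monomial, LL_sum]
  have hterm : ∀ i ∈ Finset.univ.filter (fun i : Fin m => i < j),
      LL m a (monomial d c * (C (a i j) * X i * X j))
        = c * (a i j * NN m a ((d + Finsupp.single j 2) - Finsupp.single j 1
            + Finsupp.single i 1)) := by
    intro i hi
    rw [hXX i, LL_monomial]
    have : d + (Finsupp.single i 1 + Finsupp.single j 1)
        = (d + Finsupp.single j 2) - Finsupp.single j 1 + Finsupp.single i 1 := by
      rw [← sub2_add_move (j := j) (d := d + Finsupp.single j 2) (by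
        simp [Finsupp.add_apply, Finsupp.single_apply]) i]
      rw [add_tsub_cancel_right]
    rw [this]; ring
  rw [Finset.sum_congr rfl hterm, ← Finset.mul_sum]
  have hstep := NN_step a ((∑ k, (d + Finsupp.single j 2 : Fin m →₀ ℕ) k * k.val) + 1)
    (d + Finsupp.single j 2) j (by omega)
    (by simp [Finsupp.add_apply, Finsupp.single_apply])
  rw [← hstep]
  ring

lemma LL_mul_rel (p : MvPolynomial (Fin m) ℤ) (j : Fin m) : LL m a (p * rel m a j) = 0 := by
  conv_lhs => rw [← MvPolynomial.support_sum_monomial_coeff p, Finset.sum_mul]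
  rw [LL_sum]
  exact Finset.sum_eq_zero fun d _ => LL_monomial_mul_rel d (p.coeff d) j

lemma LL_vanish {x : MvPolynomial (Fin m) ℤ} (hx : x ∈ BSideal m a) : LL m a x = 0 := by
  have key : ∀ q : MvPolynomial (Fin m) ℤ, LL m a (q * x) = 0 := by
    refine Submodule.span_induction
      (p := fun y _ => ∀ q : MvPolynomial (Fin m) ℤ, LL m a (q * y) = 0)
      ?_ ?_ ?_ ?_ hx
    · rintro y ⟨j, rfl⟩ q
      exact LL_mul_rel q j
    · intro q; rw [mul_zero, LL_zero]
    · intro y z _ _ hy hz q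
      rw [mul_add, LL_add, hy, hz, add_zero]
    · intro r y _ hy q
      rw [smul_eq_mul, ← mul_assoc, hy]
  simpa using key 1

lemma prod_monomial {ι : Type*} (s : Finset ι) (f : ι → (Fin m →₀ ℕ)) :
    ∏ i ∈ s, (monomial (f i) (1 : ℤ) : MvPolynomial (Fin m) ℤ)
      = monomial (∑ i ∈ s, f i) 1 := by
  classical
  induction s using Finset.cons_induction with
  | empty => simp
  | cons i s his ih =>
      rw [Finset.prod_cons, Finset.sum_cons, ih, monomial_mul, one_mul]

lemma prod_X_eq : (∏ i : Fin m, (X i : MvPolynomial (Fin m) ℤ))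
    = monomial (∑ k : Fin m, Finsupp.single k 1) 1 := by
  rw [← prod_monomial]
  refine Finset.prod_congr rfl fun i _ => ?_
  rw [← X_pow_eq_monomial, pow_one]

lemma ones_apply (k : Fin m) : (∑ i : Fin m, Finsupp.single i 1 : Fin m →₀ ℕ) k = 1 := by
  rw [Finsupp.finset_sum_apply, Finset.sum_eq_single k]
  · simp
  · intro b _ hb; simp [Finsupp.single_apply, hb]
  · intro hb; exact absurd (Finset.mem_univ k) hb

lemma all_one_of_no_square {d : Fin m →₀ ℕ} (hS : ∑ k, d k = m)
    (hno : ¬∃ j, 2 ≤ d j) (k : Fin m) : d k = 1 := by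
  push_neg at hno
  by_contra hk
  have hk0 : d k = 0 := by have := hno k; omega
  have : ∑ i : Fin m, d i < ∑ i : Fin m, 1 := by
    refine Finset.sum_lt_sum (fun i _ => by have := hno i; omega) ⟨k, Finset.mem_univ k, by omega⟩
  simp only [Finset.sum_const, Finset.card_univ, Fintype.card_fin, smul_eq_mul, mul_one] at this
  omega

lemma mk_C_mul (I : Ideal (MvPolynomial (Fin m) ℤ)) (z : ℤ) (p : MvPolynomial (Fin m) ℤ) :
    Ideal.Quotient.mk I (C z * p) = z • Ideal.Quotient.mk I p := by
  have hz : Ideal.Quotient.mk I (C z) = ((z : ℤ) : MvPolynomial (Fin m) ℤ ⧸ I) :=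
    eq_intCast ((Ideal.Quotient.mk I).comp MvPolynomial.C) z
  rw [map_mul, zsmul_eq_mul, hz]

lemma mono_mul_CXX (d : Fin m →₀ ℕ) (c z : ℤ) (i j : Fin m) :
    (monomial d c : MvPolynomial (Fin m) ℤ) * (C z * X i * X j)
      = monomial (d + (Finsupp.single i 1 + Finsupp.single j 1)) (c * z) := by
  rw [mul_assoc, mul_comm (X i) (X j),
    show (X j : MvPolynomial (Fin m) ℤ) * X i
        = monomial (Finsupp.single i 1 + Finsupp.single j 1) 1 by
      rw [← pow_one (X j : MvPolynomial (Fin m) ℤ), ← pow_one (X i : MvPolynomial (Fin m) ℤ),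
        X_pow_eq_monomial, X_pow_eq_monomial, monomial_mul, mul_one, add_comm],
    C_mul_monomial, mul_one, monomial_mul]

lemma mk_monomial : ∀ (M : ℕ) (d : Fin m →₀ ℕ), (∑ k, d k * k.val) < M → (∑ k, d k) = m →
    Ideal.Quotient.mk (BSideal m a) (monomial d 1)
      = NN m a d • Ideal.Quotient.mk (BSideal m a) (∏ i : Fin m, X i) := by
  intro M
  induction M with
  | zero => intro d hM _; exact absurd hM (Nat.not_lt_zero _)
  | succ M IH =>
    intro d hM hS
    by_cases hs : ∃ j, 2 ≤ d j
    · have hj : 2 ≤ d hs.choose := hs.choose_spec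
      -- the rewriting step using the relation
      have hid : monomial d (1 : ℤ)
          - ∑ i ∈ Finset.univ.filter (fun i : Fin m => i < hs.choose),
              C (a i hs.choose) *
                monomial (d - Finsupp.single hs.choose 1 + Finsupp.single i 1) 1
          = monomial (d - Finsupp.single hs.choose 2) 1 * rel m a hs.choose := by
        rw [rel, mul_sub, Finset.mul_sum]
        congr 1
        · rw [X_pow_eq_monomial, monomial_mul, mul_one,
            tsub_add_cancel_of_le (Finsupp.single_le_iff.mpr hj)]
        · refine Finset.sum_congr rfl fun i hi => ?_
          rw [mono_mul_CXX, one_mul, sub2_add_move hj i, C_mul_monomial, mul_one]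
      have hmem : monomial d (1 : ℤ)
          - ∑ i ∈ Finset.univ.filter (fun i : Fin m => i < hs.choose),
              C (a i hs.choose) *
                monomial (d - Finsupp.single hs.choose 1 + Finsupp.single i 1) 1
          ∈ BSideal m a := by
        rw [hid]
        exact Ideal.mul_mem_left _ _ (Ideal.subset_span ⟨hs.choose, rfl⟩)
      have hmk : Ideal.Quotient.mk (BSideal m a) (monomial d 1)
          = Ideal.Quotient.mk (BSideal m a)
              (∑ i ∈ Finset.univ.filter (fun i : Fin m => i < hs.choose),
                C (a i hs.choose) *
                  monomial (d - Finsupp.single hs.choose 1 + Finsupp.single i 1) 1) :=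
        Ideal.Quotient.eq.mpr hmem
      rw [hmk, map_sum]
      have hterm : ∀ i ∈ Finset.univ.filter (fun i : Fin m => i < hs.choose),
          Ideal.Quotient.mk (BSideal m a)
              (C (a i hs.choose) *
                monomial (d - Finsupp.single hs.choose 1 + Finsupp.single i 1) 1)
            = (a i hs.choose *
                NN m a (d - Finsupp.single hs.choose 1 + Finsupp.single i 1)) •
                Ideal.Quotient.mk (BSideal m a) (∏ i : Fin m, X i) := by
        intro i hi
        have hilt : i < hs.choose := (Finset.mem_filter.mp hi).2
        rw [mk_C_mul, IH _ (lt_of_lt_of_le (mu_move hilt (by omega)) (by omega))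
          (by rw [deg_move (by omega)]; exact hS), smul_smul]
      rw [Finset.sum_congr rfl hterm, ← Finset.sum_smul]
      congr 1
      rw [NN, if_pos hS, dif_pos hs]
      exact (Finset.sum_attach (Finset.univ.filter fun i => i < hs.choose)
        (fun i => a i hs.choose *
          NN m a (d - Finsupp.single hs.choose 1 + Finsupp.single i 1))).symm
    · have hd : d = ∑ k : Fin m, Finsupp.single k 1 :=
        Finsupp.ext fun k => by rw [ones_apply, all_one_of_no_square hS hs k]
      rw [NN, if_pos hS, dif_neg hs, one_smul, prod_X_eq, hd]

lemma weight_one_sum (d : Fin m →₀ ℕ) :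
    (Finsupp.weight (1 : Fin m → ℕ)) d = ∑ k, d k := by
  rw [Finsupp.weight_apply, Finsupp.sum_fintype]
  · simp
  · intro i; simp

/-- For `H = ℤ[x_1, …, x_m]/J` as above, the degree-`2m` component of `H`
(with grading `deg x_i = 2`, i.e. the image of the polynomials homogeneous of polynomial
degree `m`) is a free abelian group of rank `1` generated by the class of `x_1 ⋯ x_m`:
every class of a homogeneous degree-`m` polynomial is a *unique* integer multiple of the
class of `x_1 ⋯ x_m`. -/
theorem BS_top_component_free_rank_one (m : ℕ) (a : Fin m → Fin m → ℤ)
    (h : MvPolynomial (Fin m) ℤ) (hh : h.IsHomogeneous m) :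
    ∃! n : ℤ,
      Ideal.Quotient.mk (BSideal m a) h =
        n • Ideal.Quotient.mk (BSideal m a) (∏ i : Fin m, X i) := by
  have hLone : LL m a (∏ i : Fin m, X i) = 1 := by
    rw [prod_X_eq, LL_monomial, one_mul, NN, if_pos, dif_neg]
    · rintro ⟨j, hj⟩; rw [ones_apply] at hj; omega
    · refine Finset.sum_congr rfl (fun k _ => ones_apply k) |>.trans ?_
      simp
  have hmain : Ideal.Quotient.mk (BSideal m a) h
      = LL m a h • Ideal.Quotient.mk (BSideal m a) (∏ i : Fin m, X i) := by
    conv_lhs => rw [← MvPolynomial.support_sum_monomial_coeff h]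
    rw [map_sum, LL, Finset.sum_smul]
    refine Finset.sum_congr rfl fun d hd => ?_
    have hdm : (∑ k, d k) = m := by
      rw [← weight_one_sum]
      exact hh (MvPolynomial.mem_support_iff.mp hd)
    have : (monomial d (MvPolynomial.coeff d h) : MvPolynomial (Fin m) ℤ)
        = C (MvPolynomial.coeff d h) * monomial d 1 := by
      rw [C_mul_monomial, mul_one]
    rw [this, mk_C_mul, mk_monomial ((∑ k, d k * k.val) + 1) d (by omega) hdm, smul_smul]
  refine ⟨LL m a h, hmain, fun n' hn' => ?_⟩
  have hz : (n' - LL m a h) • Ideal.Quotient.mk (BSideal m a) (∏ i : Fin m, X i) = 0 := by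
    rw [sub_smul, ← hmain, ← hn', sub_self]
  have hz2 : ((n' - LL m a h) • (∏ i : Fin m, X i) : MvPolynomial (Fin m) ℤ) ∈ BSideal m a := by
    rw [← Ideal.Quotient.eq_zero_iff_mem, map_zsmul]
    exact hz
  have := LL_vanish hz2
  rw [LL_smul, hLone, mul_one] at this
  omega
end
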